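/- Let λ > 0 and u be a C^{2r} function on [-1,1] satisfying (-1)^r u^{(2r)} + λ u = 0 on (-1,1) with u^{(s)}(-1) = (-1)^{k-1}δ_{r-k-1,s}, u^{(s)}(1) = 0 for s = 0,...,r-1, where 0 ≤ k ≤ r-1. Set f = u^{(r)}. Then f^{(k)}(-1) = ‖u^{(r)}‖²_{L²} + λ‖u‖²_{L²} = ‖u^{(r)}‖_{L²}‖f‖_{L²} + ‖u‖_{L²}‖f^{(r)}‖_{L²}; i.e., f is extremal in the pointwise Landau–Kolmogorov inequality. -/

import Mathlib

open Set intervalIntegral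

lemma iteratedDeriv_comp_add (m n : ℕ) (f : ℝ → ℝ) :
    iteratedDeriv m (iteratedDeriv n f) = iteratedDeriv (m + n) f := by
  simp [iteratedDeriv_eq_iterate, ← Function.iterate_add_apply]

theorem stmt_10 (r k : ℕ) (hr : 1 ≤ r) (hk : k ≤ r - 1) (lam : ℝ) (hlam : 0 < lam)
    (u : ℝ → ℝ) (hu : ContDiff ℝ ((2 * r : ℕ) : ℕ∞) u)
    (hode : ∀ x ∈ Ioo (-1 : ℝ) 1, (-1 : ℝ) ^ r * iteratedDeriv (2 * r) u x + lam * u x = 0)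
    (hbcl : ∀ s < r, iteratedDeriv s u (-1) = (-1 : ℝ) ^ (k + 1) * (if r - k - 1 = s then 1 else 0))
    (hbcr : ∀ s < r, iteratedDeriv s u 1 = 0) :
    iteratedDeriv k (iteratedDeriv r u) (-1)
        = (∫ x in (-1 : ℝ)..1, (iteratedDeriv r u x) ^ 2)
          + lam * ∫ x in (-1 : ℝ)..1, (u x) ^ 2 ∧
    iteratedDeriv k (iteratedDeriv r u) (-1)
        = Real.sqrt (∫ x in (-1 : ℝ)..1, (iteratedDeriv r u x) ^ 2) *
            Real.sqrt (∫ x in (-1 : ℝ)..1, (iteratedDeriv r u x) ^ 2)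
          + Real.sqrt (∫ x in (-1 : ℝ)..1, (u x) ^ 2) *
            Real.sqrt (∫ x in (-1 : ℝ)..1, (iteratedDeriv r (iteratedDeriv r u) x) ^ 2) := by
  have hkr : k < r := by omega
  have hsq : ((-1 : ℝ) ^ r) * ((-1 : ℝ) ^ r) = 1 := by
    rw [← pow_add, Even.neg_one_pow ⟨r, rfl⟩]
  have hder : ∀ m < 2 * r, ∀ x : ℝ,
      HasDerivAt (iteratedDeriv m u) (iteratedDeriv (m + 1) u x) x := by
    intro m hm x
    rw [iteratedDeriv_succ]
    exact ((hu.differentiable_iteratedDeriv m (by exact_mod_cast hm)) x).hasDerivAt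
  have hcont : ∀ m ≤ 2 * r, Continuous (iteratedDeriv m u) := fun m hm =>
    hu.continuous_iteratedDeriv m (by exact_mod_cast hm)
  set W : ℝ → ℝ := fun x => ∑ j ∈ Finset.range r,
      (-1 : ℝ) ^ j * iteratedDeriv (r + j) u x * iteratedDeriv (r - 1 - j) u x with hW
  set T : ℕ → ℝ → ℝ := fun j x =>
      (-1 : ℝ) ^ j * (iteratedDeriv (r + j) u x * iteratedDeriv (r - j) u x) with hT
  set g : ℝ → ℝ := fun x => T 0 x - T r x with hg
  have hWderiv : ∀ x : ℝ, HasDerivAt W (g x) x := by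
    intro x
    have h1 : HasDerivAt W
        (∑ j ∈ Finset.range r,
          ((-1 : ℝ) ^ j * (iteratedDeriv (r + j + 1) u x * iteratedDeriv (r - 1 - j) u x
            + iteratedDeriv (r + j) u x * iteratedDeriv (r - j) u x))) x := by
      apply HasDerivAt.fun_sum
      intro j hj
      have hjr : j < r := Finset.mem_range.mp hj
      have e1 : r - 1 - j + 1 = r - j := by omega
      have h2 : HasDerivAt (fun x => iteratedDeriv (r + j) u x * iteratedDeriv (r - 1 - j) u x)
          (iteratedDeriv (r + j + 1) u x * iteratedDeriv (r - 1 - j) u x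
            + iteratedDeriv (r + j) u x * iteratedDeriv (r - j) u x) x := by
        have ha := hder (r + j) (by omega) x
        have hb := hder (r - 1 - j) (by omega) x
        rw [e1] at hb
        exact ha.mul hb
      simpa [mul_assoc, mul_add] using h2.const_mul ((-1 : ℝ) ^ j)
    have h3 : (∑ j ∈ Finset.range r,
        ((-1 : ℝ) ^ j * (iteratedDeriv (r + j + 1) u x * iteratedDeriv (r - 1 - j) u x
          + iteratedDeriv (r + j) u x * iteratedDeriv (r - j) u x)))
        = g x := by
      rw [hg]
      show _ = T 0 x - T r x
      rw [← Finset.sum_range_sub' (fun j => T j x) r]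
      apply Finset.sum_congr rfl
      intro j hj
      have hjr : j < r := Finset.mem_range.mp hj
      have e2 : r - (j + 1) = r - 1 - j := by omega
      rw [hT]
      simp only
      rw [e2, pow_succ]
      ring
    rw [← h3]
    exact h1
  have hgc : Continuous g := by
    have h0 : Continuous (T 0) := by
      rw [hT]
      exact continuous_const.mul ((hcont (r + 0) (by omega)).mul (hcont (r - 0) (by omega)))
    have hrT : Continuous (T r) := by
      rw [hT]
      exact continuous_const.mul ((hcont (r + r) (by omega)).mul (hcont (r - r) (by omega)))
    rw [hg]
    exact h0.sub hrT
  have hftc : ∫ x in (-1 : ℝ)..1, g x = W 1 - W (-1) :=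
    intervalIntegral.integral_eq_sub_of_hasDerivAt (fun x _ => hWderiv x)
      (hgc.intervalIntegrable _ _)
  have hW1 : W 1 = 0 := by
    rw [hW]
    show (∑ j ∈ Finset.range r, (-1 : ℝ) ^ j * iteratedDeriv (r + j) u 1
      * iteratedDeriv (r - 1 - j) u 1) = 0
    apply Finset.sum_eq_zero
    intro j hj
    have hjr : j < r := Finset.mem_range.mp hj
    rw [hbcr _ (by omega : r - 1 - j < r), mul_zero]
  have hWm1 : W (-1) = -(iteratedDeriv (r + k) u (-1)) := by
    rw [hW]
    show (∑ j ∈ Finset.range r, (-1 : ℝ) ^ j * iteratedDeriv (r + j) u (-1)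
      * iteratedDeriv (r - 1 - j) u (-1)) = _
    rw [Finset.sum_eq_single k]
    · rw [hbcl _ (by omega : r - 1 - k < r), if_pos (by omega), pow_succ]
      have hsqk : ((-1 : ℝ) ^ k) * ((-1 : ℝ) ^ k) = 1 := by
        rw [← pow_add, Even.neg_one_pow ⟨k, rfl⟩]
      linear_combination (-(iteratedDeriv (r + k) u (-1))) * hsqk
    · intro j hj hne
      have hjr : j < r := Finset.mem_range.mp hj
      rw [hbcl _ (by omega : r - 1 - j < r), if_neg (by omega), mul_zero, mul_zero]
    · intro h
      exact absurd (Finset.mem_range.mpr hkr) h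
  have hae : ∀ᵐ x : ℝ, x ≠ (1 : ℝ) := by simp [MeasureTheory.ae_iff]
  have hode' : ∀ x ∈ Ioo (-1 : ℝ) 1,
      iteratedDeriv (2 * r) u x = -((-1 : ℝ) ^ r * lam * u x) := by
    intro x hx
    have h := hode x hx
    linear_combination ((-1 : ℝ) ^ r) * h - iteratedDeriv (2 * r) u x * hsq
  have hgeq : ∀ x ∈ Ioo (-1 : ℝ) 1,
      g x = (iteratedDeriv r u x) ^ 2 + lam * (u x) ^ 2 := by
    intro x hx
    rw [hg, hT]
    simp only [Nat.add_zero, Nat.sub_zero, pow_zero, one_mul]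
    have hrr : r + r = 2 * r := by ring
    have h0 : r - r = 0 := by omega
    rw [hrr, h0, iteratedDeriv_zero, hode' x hx]
    linear_combination (lam * (u x) ^ 2) * hsq
  have hcongr : ∫ x in (-1 : ℝ)..1, g x
      = ∫ x in (-1 : ℝ)..1, ((iteratedDeriv r u x) ^ 2 + lam * (u x) ^ 2) := by
    apply intervalIntegral.integral_congr_ae
    filter_upwards [hae] with x hx1 hx
    rw [uIoc_of_le (by norm_num : (-1 : ℝ) ≤ 1)] at hx
    exact hgeq x ⟨hx.1, lt_of_le_of_ne hx.2 hx1⟩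
  have hint1 : IntervalIntegrable (fun x => (iteratedDeriv r u x) ^ 2)
      MeasureTheory.volume (-1) 1 :=
    ((hcont r (by omega)).pow 2).intervalIntegrable _ _
  have hint2 : IntervalIntegrable (fun x => lam * (u x) ^ 2) MeasureTheory.volume (-1) 1 :=
    (continuous_const.mul (hu.continuous.pow 2)).intervalIntegrable _ _
  have hsplit : ∫ x in (-1 : ℝ)..1, ((iteratedDeriv r u x) ^ 2 + lam * (u x) ^ 2)
      = (∫ x in (-1 : ℝ)..1, (iteratedDeriv r u x) ^ 2)
        + lam * ∫ x in (-1 : ℝ)..1, (u x) ^ 2 := by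
    rw [intervalIntegral.integral_add hint1 hint2, intervalIntegral.integral_const_mul]
  have hDk : iteratedDeriv k (iteratedDeriv r u) (-1) = iteratedDeriv (r + k) u (-1) := by
    rw [iteratedDeriv_comp_add, Nat.add_comm k r]
  have main : iteratedDeriv k (iteratedDeriv r u) (-1)
      = (∫ x in (-1 : ℝ)..1, (iteratedDeriv r u x) ^ 2)
        + lam * ∫ x in (-1 : ℝ)..1, (u x) ^ 2 := by
    rw [hDk, ← hsplit, ← hcongr, hftc, hW1, hWm1]
    ring
  refine ⟨main, ?_⟩
  set A := ∫ x in (-1 : ℝ)..1, (iteratedDeriv r u x) ^ 2 with hA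
  set B := ∫ x in (-1 : ℝ)..1, (u x) ^ 2 with hB
  have hA0 : 0 ≤ A :=
    intervalIntegral.integral_nonneg (by norm_num) (fun x _ => sq_nonneg _)
  have hB0 : 0 ≤ B :=
    intervalIntegral.integral_nonneg (by norm_num) (fun x _ => sq_nonneg _)
  have hC : (∫ x in (-1 : ℝ)..1, (iteratedDeriv r (iteratedDeriv r u) x) ^ 2)
      = lam ^ 2 * B := by
    have hcomp : iteratedDeriv r (iteratedDeriv r u) = iteratedDeriv (2 * r) u := by
      rw [iteratedDeriv_comp_add, two_mul]
    rw [hcomp]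
    have heq : ∫ x in (-1 : ℝ)..1, (iteratedDeriv (2 * r) u x) ^ 2
        = ∫ x in (-1 : ℝ)..1, lam ^ 2 * (u x) ^ 2 := by
      apply intervalIntegral.integral_congr_ae
      filter_upwards [hae] with x hx1 hx
      rw [uIoc_of_le (by norm_num : (-1 : ℝ) ≤ 1)] at hx
      rw [hode' x ⟨hx.1, lt_of_le_of_ne hx.2 hx1⟩]
      linear_combination (lam ^ 2 * (u x) ^ 2) * hsq
    rw [heq, intervalIntegral.integral_const_mul, hB]
  rw [main, hC, Real.mul_self_sqrt hA0, Real.sqrt_mul (sq_nonneg lam),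
    Real.sqrt_sq hlam.le]
  rw [show Real.sqrt B * (lam * Real.sqrt B) = lam * (Real.sqrt B * Real.sqrt B) by ring,
    Real.mul_self_sqrt hB0]
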